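/- Let L ∈ ℝ^{N×N} be a symmetric graph Laplacian (L𝟏 = 0, off-diagonal entries nonpositive) and D = diag(d₁,…,d_n) with d_i > 0, and set ℒ = −L ⊗ D. Then for every 1 ≤ p ≤ ∞ and any solution u of u̇ = ℒu, the p-norm ‖u(t)‖_p is nonincreasing in t; consequently μ_p(ℒ) = 0 (since 0 is an eigenvalue). -/

import Mathlib

open Filter Matrix Kronecker

/-- The `L^p` norm (`1 ≤ p ≤ ∞`) of a vector. -/
noncomputable def lpVecNorm {ι : Type*} [Fintype ι] (p : ENNReal) (x : ι → ℝ) : ℝ :=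
  if p = ⊤ then ⨆ i, |x i| else (∑ i, |x i| ^ p.toReal) ^ (1 / p.toReal)

/-- The operator norm of a matrix induced by the `L^p` norm. -/
noncomputable def lpOpNorm {ι : Type*} [Fintype ι] (p : ENNReal) (M : Matrix ι ι ℝ) : ℝ :=
  sSup {r : ℝ | ∃ x : ι → ℝ, lpVecNorm p x = 1 ∧ r = lpVecNorm p (M.mulVec x)}

section Aux

attribute [local instance] Matrix.linftyOpSemiNormedRing Matrix.linftyOpNormedRing
  Matrix.linftyOpNormedAlgebra

variable {ι : Type*} [Fintype ι] [DecidableEq ι]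

/-- Doubly (sub)stochastic matrices are `ℓ^p` contractions. -/
lemma lp_contraction [Nonempty ι] {A : Matrix ι ι ℝ}
    (h0 : ∀ i j, 0 ≤ A i j) (hrow : ∀ i, ∑ j, A i j = 1) (hcol : ∀ j, ∑ i, A i j = 1)
    {p : ENNReal} (hp : 1 ≤ p) (x : ι → ℝ) :
    lpVecNorm p (A.mulVec x) ≤ lpVecNorm p x := by
  have habs : ∀ i, |(A.mulVec x) i| ≤ ∑ j, A i j * |x j| := by
    intro i
    calc |(A.mulVec x) i| = |∑ j, A i j * x j| := by
          simp [Matrix.mulVec, dotProduct]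
      _ ≤ ∑ j, |A i j * x j| := Finset.abs_sum_le_sum_abs _ _
      _ = ∑ j, A i j * |x j| := by
          refine Finset.sum_congr rfl fun j _ => ?_
          rw [abs_mul, abs_of_nonneg (h0 i j)]
  rcases eq_or_ne p ⊤ with hT | hT
  · subst hT
    simp only [lpVecNorm, if_pos rfl]
    have hbdd : BddAbove (Set.range fun k => |x k|) :=
      Set.Finite.bddAbove (Set.finite_range _)
    refine ciSup_le fun i => ?_
    refine le_trans (habs i) ?_
    calc ∑ j, A i j * |x j| ≤ ∑ j, A i j * (⨆ k, |x k|) := by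
          refine Finset.sum_le_sum fun j _ =>
            mul_le_mul_of_nonneg_left (le_ciSup hbdd j) (h0 i j)
      _ = ⨆ k, |x k| := by rw [← Finset.sum_mul, hrow i, one_mul]
  · have hq1 : (1 : ℝ) ≤ p.toReal := by
      simpa using ENNReal.toReal_mono hT hp
    have hq0 : (0 : ℝ) < p.toReal := lt_of_lt_of_le one_pos hq1
    simp only [lpVecNorm, if_neg hT]
    refine Real.rpow_le_rpow
      (Finset.sum_nonneg fun i _ => Real.rpow_nonneg (abs_nonneg _) _) ?_ (by positivity)
    calc ∑ i, |(A.mulVec x) i| ^ p.toReal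
        ≤ ∑ i, (∑ j, A i j * |x j|) ^ p.toReal := by
          refine Finset.sum_le_sum fun i _ =>
            Real.rpow_le_rpow (abs_nonneg _) (habs i) hq0.le
      _ ≤ ∑ i, ∑ j, A i j * |x j| ^ p.toReal := by
          refine Finset.sum_le_sum fun i _ =>
            Real.rpow_arith_mean_le_arith_mean_rpow Finset.univ (A i) (fun j => |x j|)
              (fun j _ => h0 i j) (hrow i) (fun j _ => abs_nonneg _) hq1
      _ = ∑ j, |x j| ^ p.toReal := by
          rw [Finset.sum_comm]
          refine Finset.sum_congr rfl fun j _ => ?_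
          rw [← Finset.sum_mul, hcol j, one_mul]

lemma lpOpNorm_eq_one_of [Nonempty ι] {M : Matrix ι ι ℝ} {p : ENNReal} (hp : 1 ≤ p)
    (hle : ∀ x, lpVecNorm p (M.mulVec x) ≤ lpVecNorm p x)
    (hconst : M.mulVec (fun _ => (1 : ℝ)) = fun _ => 1) :
    lpOpNorm p M = 1 := by
  obtain ⟨x, hx1, hx2⟩ : ∃ x : ι → ℝ, lpVecNorm p x = 1 ∧ M.mulVec x = x := by
    rcases eq_or_ne p ⊤ with hT | hT
    · subst hT
      exact ⟨fun _ => 1, by simp [lpVecNorm], hconst⟩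
    · have hq1 : (1 : ℝ) ≤ p.toReal := by simpa using ENNReal.toReal_mono hT hp
      have hq0 : (0 : ℝ) < p.toReal := lt_of_lt_of_le one_pos hq1
      have hcard : (0 : ℝ) < (Fintype.card ι : ℝ) := by exact_mod_cast Fintype.card_pos
      set c : ℝ := (Fintype.card ι : ℝ) ^ (-(1 / p.toReal)) with hc
      have hcpos : 0 < c := Real.rpow_pos_of_pos hcard _
      refine ⟨fun _ => c, ?_, ?_⟩
      · simp only [lpVecNorm, if_neg hT, abs_of_pos hcpos]
        rw [Finset.sum_const, Finset.card_univ, nsmul_eq_mul, hc,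
          ← Real.rpow_mul hcard.le]
        have he : (-(1 / p.toReal)) * p.toReal = -1 := by field_simp
        rw [he, Real.rpow_neg_one, mul_inv_cancel₀ hcard.ne', Real.one_rpow]
      · have h1 : M.mulVec (fun _ => c) = c • M.mulVec (fun _ => (1 : ℝ)) := by
          have : (fun _ : ι => c) = c • (fun _ : ι => (1 : ℝ)) := by funext i; simp
          rw [this, Matrix.mulVec_smul]
        rw [h1, hconst]
        funext i; simp
  refine IsGreatest.csSup_eq ⟨⟨x, hx1, by rw [hx2, hx1]⟩, ?_⟩
  rintro r ⟨y, hy1, rfl⟩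
  calc lpVecNorm p (M.mulVec y) ≤ lpVecNorm p y := hle y
    _ = 1 := hy1

/-- Entry extraction, as a continuous linear map. -/
noncomputable def entryCLM (i j : ι) : Matrix ι ι ℝ →L[ℝ] ℝ :=
  LinearMap.toContinuousLinearMap
    { toFun := fun M => M i j
      map_add' := fun _ _ => rfl
      map_smul' := fun _ _ => rfl }

@[simp] lemma entryCLM_apply (i j : ι) (M : Matrix ι ι ℝ) : entryCLM i j M = M i j := rfl

/-- `mulVec` by a fixed vector, as a continuous linear map in the matrix. -/
noncomputable def mulVecCLM (v : ι → ℝ) : Matrix ι ι ℝ →L[ℝ] (ι → ℝ) :=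
  LinearMap.toContinuousLinearMap
    { toFun := fun M : Matrix ι ι ℝ => M.mulVec v
      map_add' := fun M N => Matrix.add_mulVec M N v
      map_smul' := fun c M => by simp [Matrix.smul_mulVec] }

@[simp] lemma mulVecCLM_apply (v : ι → ℝ) (M : Matrix ι ι ℝ) :
    mulVecCLM v M = M.mulVec v := rfl

lemma pow_entry_nonneg {M : Matrix ι ι ℝ} (h : ∀ i j, 0 ≤ M i j) :
    ∀ (k : ℕ) (i j : ι), 0 ≤ (M ^ k) i j := by
  intro k
  induction k with
  | zero => intro i j; simp only [pow_zero, Matrix.one_apply]; positivity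
  | succ k ih =>
    intro i j
    rw [pow_succ, Matrix.mul_apply]
    exact Finset.sum_nonneg fun l _ => mul_nonneg (ih i l) (h l j)

lemma exp_entry_nonneg {M : Matrix ι ι ℝ} (h : ∀ i j, 0 ≤ M i j) (i j : ι) :
    0 ≤ NormedSpace.exp M i j := by
  have hs : Summable fun k : ℕ => ((k.factorial : ℝ))⁻¹ • M ^ k :=
    NormedSpace.expSeries_summable' (𝕂 := ℝ) M
  have hE : NormedSpace.exp M i j = ∑' k : ℕ, (((k.factorial : ℝ))⁻¹ • M ^ k) i j := by
    rw [NormedSpace.exp_eq_tsum ℝ]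
    exact ((entryCLM i j).map_tsum hs)
  rw [hE]
  refine tsum_nonneg fun k => ?_
  simp only [Matrix.smul_apply, smul_eq_mul]
  exact mul_nonneg (by positivity) (pow_entry_nonneg h k i j)

lemma exp_mulVec_eq {M : Matrix ι ι ℝ} {v : ι → ℝ} (h : M.mulVec v = 0) :
    (NormedSpace.exp M).mulVec v = v := by
  have hs : Summable fun k : ℕ => ((k.factorial : ℝ))⁻¹ • M ^ k :=
    NormedSpace.expSeries_summable' (𝕂 := ℝ) M
  have h1 : (NormedSpace.exp M).mulVec v = ∑' k : ℕ, (((k.factorial : ℝ))⁻¹ • M ^ k).mulVec v := by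
    rw [NormedSpace.exp_eq_tsum ℝ]
    exact ((mulVecCLM v).map_tsum hs)
  rw [h1]
  rw [tsum_eq_single 0 ?_]
  · simp [Matrix.one_mulVec]
  · intro k hk
    obtain ⟨k, rfl⟩ := Nat.exists_eq_succ_of_ne_zero hk
    have hz : (M ^ (k + 1)).mulVec v = 0 := by
      rw [pow_succ, ← Matrix.mulVec_mulVec, h, Matrix.mulVec_zero]
    rw [Matrix.smul_mulVec, hz, smul_zero]

lemma exp_smul_one (r : ℝ) :
    NormedSpace.exp (r • (1 : Matrix ι ι ℝ)) = Real.exp r • 1 := by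
  have h1 : r • (1 : Matrix ι ι ℝ) = algebraMap ℝ _ r :=
    (Algebra.algebraMap_eq_smul_one r).symm
  erw [h1, ← NormedSpace.algebraMap_exp_comm, Algebra.algebraMap_eq_smul_one,
    Real.exp_eq_exp_ℝ]

lemma exp_entry_nonneg_of_offdiag {M : Matrix ι ι ℝ}
    (hoff : ∀ i j, i ≠ j → 0 ≤ M i j) (i j : ι) :
    0 ≤ NormedSpace.exp M i j := by
  set c : ℝ := ∑ k, |M k k| with hc
  have hcM : ∀ k, |M k k| ≤ c :=
    fun k => Finset.single_le_sum (f := fun k => |M k k|) (fun _ _ => abs_nonneg _)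
      (Finset.mem_univ k)
  have hMpos : ∀ i j, 0 ≤ (M + c • (1 : Matrix ι ι ℝ)) i j := by
    intro i j
    rcases eq_or_ne i j with rfl | hij
    · have h1 : -|M i i| ≤ M i i := neg_abs_le _
      have h2 := hcM i
      simp only [Matrix.add_apply, Matrix.smul_apply, Matrix.one_apply_eq, smul_eq_mul,
        mul_one]
      linarith
    · simp only [Matrix.add_apply, Matrix.smul_apply, Matrix.one_apply_ne hij, smul_eq_mul,
        mul_zero, add_zero]
      exact hoff i j hij
  have hsplit : M = (M + c • (1 : Matrix ι ι ℝ)) + (-c) • 1 := by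
    rw [add_assoc, ← add_smul, add_neg_cancel, zero_smul, add_zero]
  have hcomm : Commute (M + c • (1 : Matrix ι ι ℝ)) ((-c) • (1 : Matrix ι ι ℝ)) :=
    (Commute.one_right (M + c • (1 : Matrix ι ι ℝ))).smul_right (-c)
  rw [hsplit, Matrix.exp_add_of_commute _ _ hcomm, exp_smul_one,
    mul_smul_comm, mul_one]
  simp only [Matrix.smul_apply, smul_eq_mul]
  exact mul_nonneg (Real.exp_nonneg _) (exp_entry_nonneg hMpos i j)

lemma hasDerivAt_flow (A : Matrix ι ι ℝ) (u : ℝ → ι → ℝ)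
    (hu : ∀ t, HasDerivAt u (A.mulVec (u t)) t) (s t : ℝ) :
    HasDerivAt (fun τ => (NormedSpace.exp ((s - τ) • A)).mulVec (u τ)) 0 t := by
  set G : Matrix ι ι ℝ := NormedSpace.exp ((s - t) • A) with hG
  have h2 : HasDerivAt (fun τ : ℝ => s - τ) (-1) t := (hasDerivAt_id t).const_sub s
  have hg : HasDerivAt (fun τ : ℝ => NormedSpace.exp ((s - τ) • A)) (-(G * A)) t := by
    have h1 := hasDerivAt_exp_smul_const (𝕂 := ℝ) A (s - t)
    have h3 := h1.scomp t h2
    simp at h3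
    exact h3
  have hgij : ∀ i j, HasDerivAt (fun τ => NormedSpace.exp ((s - τ) • A) i j)
      ((-(G * A)) i j) t := fun i j =>
    ((entryCLM i j).hasFDerivAt.comp_hasDerivAt t hg)
  have hui : ∀ j, HasDerivAt (fun τ => u τ j) (A.mulVec (u t) j) t :=
    fun j => hasDerivAt_pi.mp (hu t) j
  refine hasDerivAt_pi.mpr fun i => ?_
  have hsum : HasDerivAt (fun τ => ∑ j, NormedSpace.exp ((s - τ) • A) i j * u τ j)
      (∑ j, ((-(G * A)) i j * u t j + G i j * A.mulVec (u t) j)) t := by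
    refine HasDerivAt.fun_sum fun j _ => ?_
    exact (hgij i j).mul (hui j)
  have heq : (∑ j, ((-(G * A)) i j * u t j + G i j * A.mulVec (u t) j)) = 0 := by
    rw [Finset.sum_add_distrib]
    have e1 : ∑ j, (-(G * A)) i j * u t j = -((G * A).mulVec (u t) i) := by
      simp [Matrix.mulVec, dotProduct, Finset.sum_neg_distrib]
    have e2 : ∑ j, G i j * A.mulVec (u t) j = (G * A).mulVec (u t) i := by
      rw [← Matrix.mulVec_mulVec]
      simp [Matrix.mulVec, dotProduct]
    rw [e1, e2, neg_add_cancel]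
  rw [heq] at hsum
  have hfun : (fun τ => (NormedSpace.exp ((s - τ) • A)).mulVec (u τ) i)
      = fun τ => ∑ j, NormedSpace.exp ((s - τ) • A) i j * u τ j := by
    funext τ
    simp [Matrix.mulVec, dotProduct]
  rw [hfun]
  simpa using hsum

lemma eq_of_derivAt_zero {E : Type*} [NormedAddCommGroup E] [NormedSpace ℝ E] {f : ℝ → E}
    (hf : ∀ t, HasDerivAt f 0 t) (a b : ℝ) : f a = f b := by
  refine is_const_of_fderiv_eq_zero (𝕜 := ℝ) (fun t => (hf t).differentiableAt) ?_ a b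
  intro t
  have h1 := (hf t).hasFDerivAt.fderiv
  rw [h1]
  ext v
  simp

lemma sol_eq_exp (A : Matrix ι ι ℝ) (u : ℝ → ι → ℝ)
    (hu : ∀ t, HasDerivAt u (A.mulVec (u t)) t) (s t : ℝ) :
    u t = (NormedSpace.exp ((t - s) • A)).mulVec (u s) := by
  have h1 := eq_of_derivAt_zero (hasDerivAt_flow A u hu s) t s
  rw [sub_self, zero_smul, NormedSpace.exp_zero, Matrix.one_mulVec] at h1
  have h2 := congrArg (fun y => (NormedSpace.exp ((t - s) • A)).mulVec y) h1
  simp only [Matrix.mulVec_mulVec] at h2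
  have hcomm : Commute ((t - s) • A) ((s - t) • A) :=
    ((Commute.refl A).smul_left (t - s)).smul_right (s - t)
  rw [← Matrix.exp_add_of_commute _ _ hcomm] at h2
  have hzero : (t - s) • A + (s - t) • A = 0 := by
    rw [← add_smul]
    have : (t - s) + (s - t) = 0 := by ring
    rw [this, zero_smul]
  rw [hzero, NormedSpace.exp_zero, Matrix.one_mulVec] at h2
  exact h2

end Aux

/-- For a symmetric graph Laplacian `L` (`L𝟏 = 0`, nonpositive off-diagonal entries), a positive
diagonal matrix `D`, and `ℒ = -L ⊗ D`, for every `1 ≤ p ≤ ∞` every solution of `u̇ = ℒu` has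
nonincreasing `L^p` norm `‖u(t)‖_p`; consequently the induced matrix measure satisfies
`μ_p(ℒ) = 0`. -/
theorem lp_norm_nonincreasing_and_mu_zero {N n : ℕ} (hN : 0 < N) (hn : 0 < n)
    (L : Matrix (Fin N) (Fin N) ℝ) (hsym : L.IsSymm)
    (hL1 : L.mulVec (fun _ => 1) = 0)
    (hoff : ∀ i j, i ≠ j → L i j ≤ 0)
    (d : Fin n → ℝ) (hd : ∀ i, 0 < d i)
    (p : ENNReal) (hp : 1 ≤ p)
    (u : ℝ → (Fin N × Fin n → ℝ))
    (hu : ∀ t, HasDerivAt u ((-(L ⊗ₖ Matrix.diagonal d)).mulVec (u t)) t) :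
    (∀ s t : ℝ, 0 ≤ s → s ≤ t → lpVecNorm p (u t) ≤ lpVecNorm p (u s)) ∧
    Tendsto (fun h : ℝ =>
        (lpOpNorm p ((1 : Matrix (Fin N × Fin n) (Fin N × Fin n) ℝ)
          + h • (-(L ⊗ₖ Matrix.diagonal d))) - 1) / h)
      (nhdsWithin 0 (Set.Ioi 0)) (nhds 0) := by
  haveI : Nonempty (Fin N × Fin n) := ⟨(⟨0, hN⟩, ⟨0, hn⟩)⟩
  set A : Matrix (Fin N × Fin n) (Fin N × Fin n) ℝ := -(L ⊗ₖ Matrix.diagonal d) with hA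
  have hLrow : ∀ a, ∑ b, L a b = 0 := by
    intro a
    have h := congrFun hL1 a
    simpa [Matrix.mulVec, dotProduct] using h
  have hArow : ∀ x : Fin N × Fin n, ∑ y, A x y = 0 := by
    rintro ⟨a, i⟩
    have h1 : ∑ y : Fin N × Fin n, A (a, i) y
        = ∑ b, ∑ j, -(L a b * Matrix.diagonal d i j) := by
      rw [hA, Fintype.sum_prod_type]
      simp [Matrix.kroneckerMap_apply]
    have h2 : ∀ b, ∑ j, -(L a b * Matrix.diagonal d i j) = -(L a b * d i) := by
      intro b
      rw [Finset.sum_neg_distrib, ← Finset.mul_sum]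
      congr 2
      simp [Matrix.diagonal_apply]
    rw [h1, Finset.sum_congr rfl fun b _ => h2 b, Finset.sum_neg_distrib, ← Finset.sum_mul,
      hLrow a, zero_mul, neg_zero]
  have hAsymm : Aᵀ = A := by
    rw [hA, Matrix.transpose_neg, ← Matrix.kroneckerMap_transpose, Matrix.diagonal_transpose,
      hsym.eq]
  have hAcol : ∀ y : Fin N × Fin n, ∑ x, A x y = 0 := by
    intro y
    have h : ∑ x, Aᵀ y x = 0 := by rw [hAsymm]; exact hArow y
    simpa [Matrix.transpose_apply] using h
  have hAoff : ∀ x y : Fin N × Fin n, x ≠ y → 0 ≤ A x y := by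
    rintro ⟨a, i⟩ ⟨b, j⟩ hxy
    rw [hA]
    simp only [Matrix.neg_apply, Matrix.kroneckerMap_apply]
    rcases eq_or_ne a b with rfl | hab
    · have hij : i ≠ j := by
        intro hij'
        exact hxy (by rw [hij'])
      simp [Matrix.diagonal_apply_ne _ hij]
    · rcases eq_or_ne i j with rfl | hij
      · simp only [Matrix.diagonal_apply_eq]
        nlinarith [hoff a b hab, (hd i).le]
      · simp [Matrix.diagonal_apply_ne _ hij]
  have hAone : A.mulVec (fun _ => (1 : ℝ)) = 0 := by
    funext x
    have h := hArow x
    simpa [Matrix.mulVec, dotProduct] using h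
  constructor
  · intro s t _ hst
    rw [sol_eq_exp A u hu s t]
    set E := NormedSpace.exp ((t - s) • A) with hE
    have hts : 0 ≤ t - s := sub_nonneg.mpr hst
    have hEpos : ∀ x y, 0 ≤ E x y := by
      intro x y
      refine exp_entry_nonneg_of_offdiag ?_ x y
      intro x y hxy
      have : ((t - s) • A) x y = (t - s) * A x y := rfl
      rw [this]
      exact mul_nonneg hts (hAoff x y hxy)
    have hE1 : E.mulVec (fun _ => (1 : ℝ)) = fun _ => 1 := by
      rw [hE]
      exact exp_mulVec_eq (by rw [Matrix.smul_mulVec, hAone, smul_zero])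
    have hErow : ∀ x, ∑ y, E x y = 1 := by
      intro x
      have h := congrFun hE1 x
      simpa [Matrix.mulVec, dotProduct] using h
    have hEsym : Eᵀ = E := by
      rw [hE, ← Matrix.exp_transpose, Matrix.transpose_smul, hAsymm]
    have hEcol : ∀ y, ∑ x, E x y = 1 := by
      intro y
      have h : ∑ x, Eᵀ y x = 1 := by rw [hEsym]; exact hErow y
      simpa [Matrix.transpose_apply] using h
    exact lp_contraction hEpos hErow hEcol hp (u s)
  · set c : ℝ := ∑ x : Fin N × Fin n, |A x x| with hc
    have hc0 : 0 ≤ c := Finset.sum_nonneg fun _ _ => abs_nonneg _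
    have hcM : ∀ x, |A x x| ≤ c :=
      fun x => Finset.single_le_sum (f := fun x => |A x x|) (fun _ _ => abs_nonneg _)
        (Finset.mem_univ x)
    have hc1 : (0 : ℝ) < c + 1 := by linarith
    have hpos : (0 : ℝ) < (c + 1)⁻¹ := by positivity
    have hev : ∀ h ∈ Set.Ioo (0 : ℝ) (c + 1)⁻¹,
        (lpOpNorm p (1 + h • A) - 1) / h = 0 := by
      rintro h ⟨hh0, hh1⟩
      have hh1' : h * (c + 1) < 1 := by
        rw [← one_div] at hh1
        exact (lt_div_iff₀ hc1).mp hh1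
      have hM0 : ∀ x y, 0 ≤ (1 + h • A) x y := by
        intro x y
        rcases eq_or_ne x y with rfl | hxy
        · simp only [Matrix.add_apply, Matrix.one_apply_eq, Matrix.smul_apply, smul_eq_mul]
          have h1 : -|A x x| ≤ A x x := neg_abs_le _
          have h2 := hcM x
          nlinarith
        · simp only [Matrix.add_apply, Matrix.one_apply_ne hxy, Matrix.smul_apply,
            smul_eq_mul, zero_add]
          exact mul_nonneg hh0.le (hAoff x y hxy)
      have hMrow : ∀ x, ∑ y, (1 + h • A) x y = 1 := by
        intro x
        simp only [Matrix.add_apply, Matrix.smul_apply, smul_eq_mul]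
        rw [Finset.sum_add_distrib, ← Finset.mul_sum, hArow x, mul_zero, add_zero]
        simp [Matrix.one_apply]
      have hMcol : ∀ y, ∑ x, (1 + h • A) x y = 1 := by
        intro y
        simp only [Matrix.add_apply, Matrix.smul_apply, smul_eq_mul]
        rw [Finset.sum_add_distrib, ← Finset.mul_sum, hAcol y, mul_zero, add_zero]
        simp [Matrix.one_apply]
      have hle : ∀ x, lpVecNorm p ((1 + h • A).mulVec x) ≤ lpVecNorm p x :=
        fun x => lp_contraction hM0 hMrow hMcol hp x
      have hM1 : (1 + h • A).mulVec (fun _ => (1 : ℝ)) = fun _ => 1 := by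
        funext x
        have hr := hMrow x
        simpa [Matrix.mulVec, dotProduct] using hr
      rw [lpOpNorm_eq_one_of hp hle hM1]
      simp
    refine Tendsto.congr' ?_ tendsto_const_nhds
    filter_upwards [Ioo_mem_nhdsGT_of_mem (Set.mem_Ico.mpr ⟨le_refl (0 : ℝ), hpos⟩)] with h hh
    exact (hev h hh).symm
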